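/- If a random vector d is uniformly distributed over (ZMod q)^κ with q ≥ 5 odd, then the probability that the last κ−1 coordinates of ⌊(2/q)·d⌉ mod 2 are all zero is at most (⌈q/4⌉·2/q)^{κ−1} ≤ (3/5)^{κ−1}; in particular this probability tends to 0 exponentially in κ. -/

import Mathlib

open Classical Finset

/-- The rounded bit of `c ∈ ZMod q`: identify `c` with its representative
`valMinAbs c ∈ (−q/2, q/2]`, compute the nearest integer to `2c/q`
(rounding half up), and reduce mod `2`. -/
noncomputable def roundBit (q : ℕ) (c : ZMod q) : ℤ :=
  (round ((2 * (c.valMinAbs : ℚ)) / (q : ℚ))) % 2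

lemma card_roundBit_zero_le (q : ℕ) [NeZero q] (hq : 5 ≤ q) (hodd : Odd q) :
    ((Finset.univ.filter (fun c : ZMod q => roundBit q c = 0)).card : ℚ) ≤ 3 / 5 * q := by
  have hq0 : (0 : ℚ) < q := by positivity
  set k : ℤ := (((q - 1) / 4 : ℕ) : ℤ) with hk
  have hsub : Finset.univ.filter (fun c : ZMod q => roundBit q c = 0) ⊆
      (Finset.Icc (-k) k).image (fun x : ℤ => (x : ZMod q)) := by
    intro c hc
    simp only [mem_filter, mem_univ, true_and] at hc
    simp only [roundBit] at hc
    set x : ℤ := c.valMinAbs with hx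
    have hmem := c.valMinAbs_mem_Ioc
    rw [← hx] at hmem
    obtain ⟨hm1, hm2⟩ := hmem
    -- the rounded value
    set y : ℚ := 2 * (x : ℚ) / (q : ℚ) with hy
    have hy1 : -1 < y := by
      rw [hy, lt_div_iff₀ hq0]
      push_cast
      have : (-(q : ℚ)) < x * 2 := by exact_mod_cast hm1
      linarith
    have hy2 : y ≤ 1 := by
      rw [hy, div_le_iff₀ hq0]
      push_cast
      have : ((x : ℚ)) * 2 ≤ q := by exact_mod_cast hm2
      linarith
    rw [round_eq] at hc
    set r : ℤ := ⌊y + 1 / 2⌋ with hr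
    have hr1 : -1 ≤ r := by
      rw [hr, Int.le_floor]
      push_cast
      linarith
    have hr2 : r ≤ 1 := by
      have := Int.floor_le (y + 1 / 2)
      rw [← hr] at this
      by_contra h
      push_neg at h
      have : (2 : ℚ) ≤ (r : ℚ) := by exact_mod_cast h
      linarith
    have hr0 : r = 0 := by omega
    have hiv : (0 : ℚ) ≤ y + 1 / 2 ∧ y + 1 / 2 < 1 := by
      have h2 := Int.floor_eq_iff.mp (hr ▸ hr0 : ⌊y + 1 / 2⌋ = 0)
      push_cast at h2
      exact ⟨by linarith [h2.1], by linarith [h2.2]⟩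
    have h1 : -(q : ℤ) ≤ 4 * x := by
      have : (0 : ℚ) ≤ 2 * (x : ℚ) / q + 1 / 2 := hiv.1
      rw [div_add' _ _ _ (ne_of_gt hq0), le_div_iff₀ hq0] at this
      have h' : (0 : ℚ) ≤ 2 * (x : ℚ) * 2 + q := by linarith
      have h'' : (-(q : ℚ)) ≤ 4 * x := by linarith
      exact_mod_cast h''
    have h2 : 4 * x < (q : ℤ) := by
      have : 2 * (x : ℚ) / q + 1 / 2 < 1 := hiv.2
      rw [div_add' _ _ _ (ne_of_gt hq0), div_lt_iff₀ hq0] at this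
      have h'' : (4 : ℚ) * x < q := by linarith
      exact_mod_cast h''
    have hqodd : q % 2 = 1 := Nat.odd_iff.mp hodd
    simp only [Finset.mem_image]
    refine ⟨x, ?_, by rw [hx]; exact c.coe_valMinAbs⟩
    rw [Finset.mem_Icc, hk]
    omega
  have hcard : (Finset.univ.filter (fun c : ZMod q => roundBit q c = 0)).card
      ≤ 2 * ((q - 1) / 4) + 1 := by
    calc (Finset.univ.filter (fun c : ZMod q => roundBit q c = 0)).card
        ≤ ((Finset.Icc (-k) k).image (fun x : ℤ => (x : ZMod q))).card :=
          Finset.card_le_card hsub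
      _ ≤ (Finset.Icc (-k) k).card := Finset.card_image_le
      _ = (k + 1 - (-k)).toNat := Int.card_Icc _ _
      _ = 2 * ((q - 1) / 4) + 1 := by rw [hk]; omega
  have hqodd : q % 2 = 1 := Nat.odd_iff.mp hodd
  have hnat : 5 * (2 * ((q - 1) / 4) + 1) ≤ 3 * q := by omega
  have hQ : ((2 * ((q - 1) / 4) + 1 : ℕ) : ℚ) ≤ 3 / 5 * q := by
    rw [div_mul_eq_mul_div, le_div_iff₀ (by norm_num : (0:ℚ) < 5)]
    have : ((5 * (2 * ((q - 1) / 4) + 1) : ℕ) : ℚ) ≤ ((3 * q : ℕ) : ℚ) := by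
      exact_mod_cast hnat
    push_cast at this ⊢
    linarith
  calc ((Finset.univ.filter (fun c : ZMod q => roundBit q c = 0)).card : ℚ)
      ≤ ((2 * ((q - 1) / 4) + 1 : ℕ) : ℚ) := by exact_mod_cast hcard
    _ ≤ 3 / 5 * q := hQ

/-- If `d` is uniformly distributed over `(ZMod q)^κ` with `q ≥ 5` odd, the
probability that the last `κ − 1` rounded bits of `⌊(2/q)·d⌉` are all zero
is at most `(3/5)^{κ−1}`; in particular it tends to `0` exponentially
in `κ`. (The probability is the number of favourable outcomes divided by
the total number `q^κ` of outcomes.) -/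
theorem round_uniform_tail_bound (q : ℕ) [NeZero q] (hq : 5 ≤ q) (hodd : Odd q) (κ : ℕ) :
    ((Finset.univ.filter
        (fun d : Fin κ → ZMod q => ∀ j : Fin κ, (j : ℕ) ≠ 0 → roundBit q (d j) = 0)).card : ℚ)
      / (q : ℚ) ^ κ ≤ (3 / 5 : ℚ) ^ (κ - 1) := by
  have hq0 : (0 : ℚ) < q := by positivity
  have hB := card_roundBit_zero_le q hq hodd
  cases κ with
  | zero =>
    have huniv : (Finset.univ.filter
        (fun d : Fin 0 → ZMod q => ∀ j : Fin 0, (j : ℕ) ≠ 0 → roundBit q (d j) = 0)) =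
        Finset.univ := by
      apply Finset.filter_true_of_mem
      intro d _ j
      exact j.elim0
    rw [huniv]
    simp
  | succ n =>
    set B := Finset.univ.filter (fun c : ZMod q => roundBit q c = 0) with hBdef
    have hset : (Finset.univ.filter
        (fun d : Fin (n+1) → ZMod q => ∀ j : Fin (n+1), (j : ℕ) ≠ 0 → roundBit q (d j) = 0))
        = Fintype.piFinset (fun j : Fin (n+1) =>
            if (j : ℕ) = 0 then (Finset.univ : Finset (ZMod q)) else B) := by
      ext d
      simp only [mem_filter, mem_univ, true_and, Fintype.mem_piFinset, hBdef]
      constructor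
      · intro h j
        by_cases hj : (j : ℕ) = 0
        · simp [hj]
        · simp [hj, h j hj]
      · intro h j hj
        have := h j
        simp [hj] at this
        exact this
    rw [hset, Fintype.card_piFinset]
    have hprod : (∏ j : Fin (n+1),
        (if (j : ℕ) = 0 then (Finset.univ : Finset (ZMod q)) else B).card)
        = q * B.card ^ n := by
      rw [Fin.prod_univ_succ]
      simp [ZMod.card, Fin.val_succ]
    rw [hprod]
    have heq : ((q * B.card ^ n : ℕ) : ℚ) / (q : ℚ) ^ (n + 1)
        = ((B.card : ℚ) / q) ^ n := by
      push_cast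
      rw [div_pow]
      field_simp
      ring
    rw [heq]
    have hfac : (B.card : ℚ) / q ≤ 3 / 5 := by
      rw [div_le_iff₀ hq0]
      linarith
    have hnn : (0 : ℚ) ≤ (B.card : ℚ) / q := by positivity
    have := pow_le_pow_left₀ hnn hfac n
    simpa using this
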